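/- Let a and b be nonnegative integers with a > b, and let i, j, k be nonnegative integers with i < j ≤ k. Then binom(a+i, i)·binom(b+j, j) ≤ binom(b+i, i)·binom(a+j, j). -/
import Mathlib

lemma step8 (a b i : ℕ) (hab : b ≤ a) :
    (a + i).choose i * (b + i + 1).choose (i + 1) ≤
      (b + i).choose i * (a + i + 1).choose (i + 1) := by
  apply Nat.le_of_mul_le_mul_right _ (Nat.succ_pos i)
  calc (a + i).choose i * (b + i + 1).choose (i + 1) * (i + 1)
      = (a + i).choose i * ((b + i + 1).choose (i + 1) * (i + 1)) := by ring
    _ = (a + i).choose i * ((b + i + 1) * (b + i).choose i) := by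
        rw [← Nat.add_one_mul_choose_eq]
    _ ≤ (a + i).choose i * ((a + i + 1) * (b + i).choose i) := by
        apply Nat.mul_le_mul_left
        exact Nat.mul_le_mul_right _ (by omega)
    _ = (b + i).choose i * ((a + i + 1) * (a + i).choose i) := by ring
    _ = (b + i).choose i * ((a + i + 1).choose (i + 1) * (i + 1)) := by
        rw [← Nat.add_one_mul_choose_eq]
    _ = (b + i).choose i * (a + i + 1).choose (i + 1) * (i + 1) := by ring

lemma main8 (a b i j : ℕ) (hab : b ≤ a) (hij : i ≤ j) :
    (a + i).choose i * (b + j).choose j ≤ (b + i).choose i * (a + j).choose j := by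
  induction j with
  | zero => interval_cases i; simp [mul_comm]
  | succ n ih =>
    rcases Nat.lt_or_ge i (n + 1) with h | h
    · have IH := ih (by omega)
      have st := step8 a b n hab
      have hX : 0 < (a + n).choose n := Nat.choose_pos (by omega)
      have hY : 0 < (b + n).choose n := Nat.choose_pos (by omega)
      apply Nat.le_of_mul_le_mul_right _ (Nat.mul_pos hX hY)
      calc (a + i).choose i * (b + (n + 1)).choose (n + 1) * ((a + n).choose n * (b + n).choose n)
          = ((a + n).choose n * (b + n + 1).choose (n + 1)) * ((a + i).choose i * (b + n).choose n) := by
            ring_nf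
        _ ≤ ((b + n).choose n * (a + n + 1).choose (n + 1)) * ((a + i).choose i * (b + n).choose n) := by
            exact Nat.mul_le_mul_right _ st
        _ = ((a + i).choose i * (b + n).choose n) * ((a + n + 1).choose (n + 1) * (b + n).choose n) := by
            ring
        _ ≤ ((b + i).choose i * (a + n).choose n) * ((a + n + 1).choose (n + 1) * (b + n).choose n) := by
            exact Nat.mul_le_mul_right _ IH
        _ = (b + i).choose i * (a + (n + 1)).choose (n + 1) * ((a + n).choose n * (b + n).choose n) := by
            ring_nf
    · have : i = n + 1 := by omega
      subst this
      rw [mul_comm]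

theorem stmt_8 (a b i j k : ℕ) (hab : b < a) (hij : i < j) (hjk : j ≤ k) :
    (a + i).choose i * (b + j).choose j ≤ (b + i).choose i * (a + j).choose j := by
  exact main8 a b i j (le_of_lt hab) (le_of_lt hij)
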